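/- For any real θ and positive integers n, k with n ≤ k < 2n, the average (1/n) ∑_{ℓ=0}^{n-1} (sin((θ+ℓπ)/n))^{2k} equals (1/4^k)·[C(2k,k) + (−1)^n·2·C(2k,k−n)·cos(2θ)]. -/

import Mathlib

open Real Finset

theorem sinpow (z : ℂ) (k : ℕ) : Complex.sin z ^ (2*k)
    = ((-1:ℂ)/4)^k * ∑ j ∈ range (2*k+1),
        ((-1:ℂ))^j * (Nat.choose (2*k) j : ℂ) * Complex.exp (2*((j:ℂ)-k)*z*Complex.I) := by
  have hs : Complex.sin z = ((-Complex.exp (z*Complex.I)) + Complex.exp (-z*Complex.I)) * Complex.I / 2 := by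
    rw [Complex.sin]; ring
  rw [hs]
  rw [mul_div_assoc, mul_pow, add_pow]
  rw [Finset.sum_mul, Finset.mul_sum]
  apply Finset.sum_congr rfl
  intro j hj
  have hj' : j ≤ 2*k := by simpa using Nat.lt_succ_iff.mp (Finset.mem_range.mp hj)
  rw [neg_pow, ← Complex.exp_nat_mul, ← Complex.exp_nat_mul, mul_assoc ((-1:ℂ)^j), ← Complex.exp_add]
  have hI : (Complex.I/2)^(2*k) = ((-1:ℂ)/4)^k := by
    rw [div_pow, pow_mul, Complex.I_sq, pow_mul]
    norm_num
    rw [show (-(1/4):ℂ) = (-1)/4 by norm_num, div_pow]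
  rw [hI]
  have : (↑j * (z * Complex.I) + ↑(2*k - j) * (-z * Complex.I)) = 2*((j:ℂ)-k)*z*Complex.I := by
    have : ((2*k - j : ℕ) : ℂ) = 2*(k:ℂ) - j := by
      push_cast [Nat.cast_sub hj']; ring
    rw [this]; ring
  rw [this]; ring

theorem keythm (θ : ℝ) (n k : ℕ) (hn : 0 < n) (h1 : n ≤ k) (h2 : k < 2 * n) :
    ∑ ℓ ∈ Finset.range n, Complex.sin (((θ:ℂ) + ℓ * Real.pi) / n) ^ (2 * k)
      = n * ((1 / 4 ^ k) * ((Nat.choose (2 * k) k : ℂ)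
          + (-1) ^ n * 2 * (Nat.choose (2 * k) (k - n) : ℂ) * Complex.cos (2 * θ))) := by
  have hn0 : (n:ℂ) ≠ 0 := Nat.cast_ne_zero.mpr hn.ne'
  have hpi : (Real.pi : ℂ) ≠ 0 := Complex.ofReal_ne_zero.mpr Real.pi_ne_zero
  have h2pi : (2:ℂ) * Real.pi * Complex.I ≠ 0 := by
    simp [hpi, Complex.I_ne_zero]
  set G : ℕ → ℂ := fun j => ∑ ℓ ∈ Finset.range n,
      Complex.exp (2*((j:ℂ)-k) * (((θ:ℂ) + ℓ * Real.pi) / n) * Complex.I) with hG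
  have hsplit : ∀ j : ℕ, ∀ ℓ : ℕ,
      Complex.exp (2*((j:ℂ)-k) * (((θ:ℂ) + ℓ * Real.pi) / n) * Complex.I)
        = Complex.exp (2*((j:ℂ)-k) * θ / n * Complex.I)
          * (Complex.exp (2*((j:ℂ)-k) * Real.pi / n * Complex.I)) ^ ℓ := by
    intro j ℓ
    rw [← Complex.exp_nat_mul, ← Complex.exp_add]
    congr 1
    field_simp
  have hrn : ∀ j : ℕ, (Complex.exp (2*((j:ℂ)-k) * Real.pi / n * Complex.I)) ^ n = 1 := by
    intro j
    rw [← Complex.exp_nat_mul]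
    have e : (n:ℂ) * (2*((j:ℂ)-k) * Real.pi / n * Complex.I)
        = (((j:ℤ) - (k:ℤ) : ℤ) : ℂ) * (2 * Real.pi * Complex.I) := by
      rw [show 2*((j:ℂ)-k) * (Real.pi:ℂ) / n * Complex.I
            = (2*((j:ℂ)-k) * (Real.pi:ℂ) * Complex.I) / n by ring]
      rw [mul_div_assoc', mul_comm (n:ℂ), mul_div_assoc, div_self hn0, mul_one]
      push_cast; ring
    rw [e]
    exact Complex.exp_int_mul_two_pi_mul_I _
  have hvanish : ∀ j ∈ Finset.range (2*k+1), j ∉ ({k-n, k, k+n} : Finset ℕ) →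
      ((-1:ℂ))^j * (Nat.choose (2*k) j : ℂ) * G j = 0 := by
    intro j hj hnot
    simp only [Finset.mem_insert, Finset.mem_singleton] at hnot
    push_neg at hnot
    obtain ⟨ha, hb, hc⟩ := hnot
    have hjle : j ≤ 2*k := Nat.lt_succ_iff.mp (Finset.mem_range.mp hj)
    have hr1 : Complex.exp (2*((j:ℂ)-k) * Real.pi / n * Complex.I) ≠ 1 := by
      intro hone
      rw [Complex.exp_eq_one_iff] at hone
      obtain ⟨m, hm⟩ := hone
      have key : ((j:ℂ) - k) * (2*(Real.pi:ℂ)*Complex.I) = ((m:ℂ) * n) * (2*(Real.pi:ℂ)*Complex.I) := by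
        calc ((j:ℂ)-k) * (2*(Real.pi:ℂ)*Complex.I)
            = (2*((j:ℂ)-k) * (Real.pi:ℂ) / n * Complex.I) * n := by
              field_simp
          _ = ((m:ℂ) * (2 * (Real.pi:ℂ) * Complex.I)) * n := by rw [hm]
          _ = ((m:ℂ) * n) * (2*(Real.pi:ℂ)*Complex.I) := by ring
      have hcc : ((j:ℂ) - k) = (m:ℂ) * n := mul_right_cancel₀ h2pi key
      have hz : (j:ℤ) - k = m * n := by exact_mod_cast hcc
      have c1 : (j:ℤ) ≤ 2*k := by exact_mod_cast hjle
      have c2 : (n:ℤ) ≤ k := by exact_mod_cast h1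
      have c3 : (k:ℤ) < 2*n := by exact_mod_cast h2
      have c4 : (0:ℤ) < n := by exact_mod_cast hn
      have hml : -2 < m := by nlinarith
      have hmu : m < 2 := by nlinarith
      interval_cases m <;> omega
    have hGz : G j = 0 := by
      rw [hG]
      simp only
      rw [Finset.sum_congr rfl (fun ℓ _ => hsplit j ℓ), ← Finset.mul_sum,
        geom_sum_eq hr1, hrn j]
      simp
    rw [hGz, mul_zero]
  -- reduce binomial sum to three terms
  have hexp : ∑ ℓ ∈ Finset.range n, Complex.sin (((θ:ℂ) + ℓ * Real.pi) / n) ^ (2 * k)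
      = ((-1:ℂ)/4)^k * ∑ j ∈ range (2*k+1),
          ((-1:ℂ))^j * (Nat.choose (2*k) j : ℂ) * G j := by
    simp only [sinpow]
    rw [← Finset.mul_sum, Finset.sum_comm]
    congr 1
    apply Finset.sum_congr rfl
    intro j _
    rw [hG]
    simp only
    rw [Finset.mul_sum]
  have hsub : ({k-n, k, k+n} : Finset ℕ) ⊆ range (2*k+1) := by
    intro x hx
    simp only [Finset.mem_insert, Finset.mem_singleton] at hx
    rcases hx with rfl | rfl | rfl <;> simp [Finset.mem_range] <;> omega
  have hthree : ∑ j ∈ range (2*k+1), ((-1:ℂ))^j * (Nat.choose (2*k) j : ℂ) * G j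
      = ∑ j ∈ ({k-n, k, k+n} : Finset ℕ), ((-1:ℂ))^j * (Nat.choose (2*k) j : ℂ) * G j :=
    (Finset.sum_subset hsub hvanish).symm
  -- evaluate G at the three points
  have hGk : G k = n := by
    rw [hG]; simp
  have hGkp : G (k+n) = n * Complex.exp (2*(θ:ℂ)*Complex.I) := by
    rw [hG]
    simp only
    have step : ∀ ℓ ∈ range n,
        Complex.exp (2*(((k+n:ℕ):ℂ)-k) * (((θ:ℂ) + ℓ * Real.pi) / n) * Complex.I)
          = Complex.exp (2*(θ:ℂ)*Complex.I) := by
      intro ℓ _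
      have e : 2*(((k+n:ℕ):ℂ)-k) * (((θ:ℂ) + ℓ * Real.pi) / n) * Complex.I
          = 2*(θ:ℂ)*Complex.I + (ℓ:ℤ) * (2*(Real.pi:ℂ)*Complex.I) := by
        push_cast
        field_simp
        ring
      rw [e, Complex.exp_add, Complex.exp_int_mul_two_pi_mul_I, mul_one]
    rw [Finset.sum_congr rfl step]
    simp [mul_comm]
  have hGkm : G (k-n) = n * Complex.exp (-(2*(θ:ℂ))*Complex.I) := by
    rw [hG]
    simp only
    have step : ∀ ℓ ∈ range n,
        Complex.exp (2*(((k-n:ℕ):ℂ)-k) * (((θ:ℂ) + ℓ * Real.pi) / n) * Complex.I)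
          = Complex.exp (-(2*(θ:ℂ))*Complex.I) := by
      intro ℓ _
      have e : 2*(((k-n:ℕ):ℂ)-k) * (((θ:ℂ) + ℓ * Real.pi) / n) * Complex.I
          = -(2*(θ:ℂ))*Complex.I + (((-(ℓ:ℤ)) : ℤ) : ℂ) * (2*(Real.pi:ℂ)*Complex.I) := by
        push_cast [Nat.cast_sub h1]
        field_simp
        ring
      rw [e, Complex.exp_add, Complex.exp_int_mul_two_pi_mul_I, mul_one]
    rw [Finset.sum_congr rfl step]
    simp [mul_comm]
  -- expand the three-element sum
  have hne1 : (k-n) ≠ k := by omega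
  have hne2 : (k-n) ≠ k+n := by omega
  have hne3 : k ≠ k+n := by omega
  have hsum3 : ∑ j ∈ ({k-n, k, k+n} : Finset ℕ), ((-1:ℂ))^j * (Nat.choose (2*k) j : ℂ) * G j
      = ((-1:ℂ))^(k-n) * (Nat.choose (2*k) (k-n) : ℂ) * G (k-n)
        + ((-1:ℂ))^k * (Nat.choose (2*k) k : ℂ) * G k
        + ((-1:ℂ))^(k+n) * (Nat.choose (2*k) (k+n) : ℂ) * G (k+n) := by
    rw [Finset.sum_insert (by simp [hne1, hne2]), Finset.sum_insert (by simp [hne3, hn.ne']),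
      Finset.sum_singleton]
    ring
  have hch : (Nat.choose (2*k) (k+n)) = Nat.choose (2*k) (k-n) := by
    rw [← Nat.choose_symm (by omega : k+n ≤ 2*k)]
    congr 1
    omega
  have hsgn : ((-1:ℂ))^(k-n) = (-1)^k * (-1)^n := by
    have h11 : ((-1:ℂ))^n * (-1)^n = 1 := by
      rw [← pow_add, ← two_mul, pow_mul]; norm_num
    calc ((-1:ℂ))^(k-n) = (-1)^(k-n) * ((-1)^n * (-1)^n) := by rw [h11, mul_one]
      _ = ((-1)^(k-n) * (-1)^n) * (-1)^n := by ring
      _ = (-1)^(k-n+n) * (-1)^n := by rw [pow_add]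
      _ = (-1)^k * (-1)^n := by rw [Nat.sub_add_cancel h1]
  have hsgn2 : ((-1:ℂ))^(k+n) = (-1)^k * (-1)^n := pow_add _ _ _
  rw [hexp, hthree, hsum3, hGk, hGkp, hGkm, hch, hsgn, hsgn2]
  rw [Complex.cos]
  have hm4 : ((-1:ℂ)/4)^k = (-1)^k * (1/4)^k := by
    rw [← mul_pow]; norm_num
  have h4 : ((1:ℂ)/4)^k = 1/4^k := by rw [div_pow, one_pow]
  rw [hm4, h4]
  rcases Nat.even_or_odd k with hk | hk
  · simp only [hk.neg_one_pow]
    ring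
  · simp only [hk.neg_one_pow]
    ring

theorem stmt_3 (θ : ℝ) (n k : ℕ) (hn : 0 < n) (h1 : n ≤ k) (h2 : k < 2 * n) :
    (1 / (n : ℝ)) * ∑ ℓ ∈ Finset.range n, (Real.sin ((θ + ℓ * Real.pi) / n)) ^ (2 * k)
      = (1 / 4 ^ k) * ((Nat.choose (2 * k) k : ℝ)
          + (-1) ^ n * 2 * (Nat.choose (2 * k) (k - n) : ℝ) * Real.cos (2 * θ)) := by
  have key := keythm θ n k hn h1 h2
  have hnR : (n:ℝ) ≠ 0 := Nat.cast_ne_zero.mpr hn.ne'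
  have hR : ∑ ℓ ∈ Finset.range n, (Real.sin ((θ + ℓ * Real.pi) / n)) ^ (2*k)
      = n * ((1 / 4 ^ k) * ((Nat.choose (2 * k) k : ℝ)
          + (-1) ^ n * 2 * (Nat.choose (2 * k) (k - n) : ℝ) * Real.cos (2 * θ))) := by
    apply Complex.ofReal_injective
    push_cast
    convert key using 2
  rw [hR]
  field_simp
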